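/- arXiv:1307.2924 — 7 statements merged into one kernel-verified Lean document; each statement's English description precedes it below -/
import Mathlib

section
/- For every finite group G and every x ∈ G, the order of the centralizer C_G(x) divides the cardinality of the solvabilizer sol_G(x). -/
universe u

open Subgroup MulAction

private lemma solvable_iff_of_mulEquiv {A B : Type*} [Group A] [Group B] (e : A ≃* B) :
    IsSolvable A ↔ IsSolvable B :=
  ⟨fun h => @solvable_of_surjective _ _ _ _ e.toMonoidHom e.surjective h,
   fun h => @solvable_of_surjective _ _ _ _ e.symm.toMonoidHom e.symm.surjective h⟩

private lemma sol_pair_subtype {G : Type*} [Group G] (K : Subgroup G) (a b : K) :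
    IsSolvable (Subgroup.closure ({a, b} : Set K)) ↔
      IsSolvable (Subgroup.closure ({(a : G), (b : G)} : Set G)) := by
  have h : (Subgroup.closure ({a, b} : Set K)).map K.subtype
      = Subgroup.closure ({(a : G), (b : G)} : Set G) := by
    rw [MonoidHom.map_closure, Set.image_pair]
    rfl
  rw [← h]
  exact solvable_iff_of_mulEquiv (Subgroup.equivMapOfInjective _ _ K.subtype_injective)

private lemma sol_pair_conj {G : Type*} [Group G] {c x : G} (hc : c * x = x * c) (g : G) :
    IsSolvable (Subgroup.closure ({g, x} : Set G)) ↔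
      IsSolvable (Subgroup.closure ({c * g * c⁻¹, x} : Set G)) := by
  have h : (Subgroup.closure ({g, x} : Set G)).map (MulAut.conj c).toMonoidHom
      = Subgroup.closure ({c * g * c⁻¹, x} : Set G) := by
    rw [MonoidHom.map_closure, Set.image_pair]
    have hx : c * x * c⁻¹ = x := by rw [hc, mul_inv_cancel_right]
    simp [MulAut.conj_apply, hx]
  rw [← h]
  exact solvable_iff_of_mulEquiv
    (Subgroup.equivMapOfInjective _ _ (MulAut.conj c).injective)

private lemma sol_self {G : Type*} [Group G] (x : G) :
    IsSolvable (Subgroup.closure ({x, x} : Set G)) := by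
  rw [Set.pair_eq_singleton]
  apply isSolvable_of_comm
  rintro ⟨a, ha⟩ ⟨b, hb⟩
  obtain ⟨m, rfl⟩ := Subgroup.mem_closure_singleton.mp ha
  obtain ⟨k, rfl⟩ := Subgroup.mem_closure_singleton.mp hb
  ext
  push_cast
  rw [← zpow_add, ← zpow_add, add_comm]


private lemma sol_quot {G : Type*} [Group G] (N : Subgroup G) [N.Normal]
    (hN : N ≤ Subgroup.center G) (g x : G) :
    IsSolvable (Subgroup.closure ({g, x} : Set G)) ↔
      IsSolvable (Subgroup.closure ({((g : G) : G ⧸ N), ((x : G) : G ⧸ N)} : Set (G ⧸ N))) := by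
  have hmap : (Subgroup.closure ({g, x} : Set G)).map (QuotientGroup.mk' N)
      = Subgroup.closure ({((g : G) : G ⧸ N), ((x : G) : G ⧸ N)} : Set (G ⧸ N)) := by
    rw [MonoidHom.map_closure, Set.image_pair]
    rfl
  constructor
  · intro h
    rw [← hmap]
    exact @solvable_of_surjective _ _ _ _ _
      (MonoidHom.subgroupMap_surjective (QuotientGroup.mk' N) _) h
  · intro h
    set H := Subgroup.closure ({g, x} : Set G) with hH
    set φ := (QuotientGroup.mk' N).comp H.subtype with hφ
    have hrange : φ.range = Subgroup.closure
        ({((g : G) : G ⧸ N), ((x : G) : G ⧸ N)} : Set (G ⧸ N)) := by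
      rw [hφ, MonoidHom.range_comp, Subgroup.range_subtype, hmap]
    haveI hsr : IsSolvable φ.range := hrange ▸ h
    have hker : φ.rangeRestrict.ker ≤ (Subgroup.center H).subtype.range := by
      rw [MonoidHom.ker_rangeRestrict, Subgroup.range_subtype]
      intro a ha
      have haN : (a : G) ∈ N := by
        have := ha
        rw [MonoidHom.mem_ker] at this
        simpa [hφ, QuotientGroup.eq_one_iff] using this
      have haZ : (a : G) ∈ Subgroup.center G := hN haN
      rw [Subgroup.mem_center_iff]
      intro b
      ext
      exact Subgroup.mem_center_iff.mp haZ (b : G)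
    exact (have : IsSolvable (Subgroup.center H) :=
      isSolvable_of_comm (fun a b => Subtype.ext (Subgroup.mem_center_iff.mp b.2 a));
      solvable_of_ker_le_range (Subgroup.center H).subtype φ.rangeRestrict hker
        (hG' := this) (hG'' := hsr))

private lemma card_preimage_hom {G H : Type*} [Group G] [Group H] (f : G →* H)
    (hf : Function.Surjective f) (A : Set H) :
    Nat.card (f ⁻¹' A) = Nat.card A * Nat.card f.ker := by
  have e : (f ⁻¹' A) ≃ A × f.ker :=
    { toFun := fun g => (⟨f g.val, g.2⟩, ⟨(Function.surjInv hf (f g.val))⁻¹ * g.val, by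
        rw [MonoidHom.mem_ker, map_mul, map_inv, Function.surjInv_eq hf, inv_mul_cancel]⟩)
      invFun := fun ak => ⟨Function.surjInv hf ak.1.val * ak.2.val, by
        have h2 : f ak.2.val = 1 := ak.2.2
        simp only [Set.mem_preimage, map_mul, h2, mul_one, Function.surjInv_eq hf]
        exact ak.1.2⟩
      left_inv := fun g => by
        ext
        simp
      right_inv := fun ak => by
        have h2 : f ak.2.val = 1 := ak.2.2
        ext
        · simp [h2, Function.surjInv_eq hf]
        · simp [h2, Function.surjInv_eq hf] }
  rw [Nat.card_congr e, Nat.card_prod]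

private theorem case2 (n : ℕ)
    (ih : ∀ m < n,
      ∀ (G : Type u) [inst : Group G] [inst_1 : Finite G],
        Nat.card G ≤ m →
          ∀ (x : G) (p : ℕ),
            ∀ P ≤ centralizer {x}, IsPGroup p ↥P →
              Nat.card ↥P ∣ Nat.card ↑{g | IsSolvable (Subgroup.closure {g, x})})
    (G : Type u) [Group G] [Finite G] (hcard : Nat.card G ≤ n)
    (x : G) (p : ℕ) (P : Subgroup G) (hPx : P ≤ Subgroup.centralizer {x})
    (hP : IsPGroup p P) (hPZ : P ⊓ Subgroup.center G = ⊥) :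
    Nat.card P ∣ Nat.card {g : G | IsSolvable (Subgroup.closure ({g, x} : Set G))} := by
  classical
  set S := {g : G | IsSolvable (Subgroup.closure ({g, x} : Set G))} with hSdef
  have hcom : ∀ c : P, (c : G) * x = x * (c : G) := fun c =>
    (Subgroup.mem_centralizer_iff.mp (hPx c.2) x rfl).symm
  have hmem : ∀ (c : P) (g : G), g ∈ S → (c : G) * g * (c : G)⁻¹ ∈ S := fun c g hg =>
    (sol_pair_conj (hcom c) g).mp hg
  letI act : MulAction P ↥S :=
    { smul := fun c s => ⟨(c : G) * s.val * (c : G)⁻¹, hmem c s.val s.2⟩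
      one_smul := fun s => Subtype.ext (by
        show ((1 : P) : G) * s.val * ((1 : P) : G)⁻¹ = s.val
        simp)
      mul_smul := fun c d s => Subtype.ext (by
        show ((c * d : P) : G) * s.val * ((c * d : P) : G)⁻¹
            = (c : G) * ((d : G) * s.val * (d : G)⁻¹) * (c : G)⁻¹
        push_cast
        simp [mul_assoc]) }
  have smul_val : ∀ (c : P) (s : ↥S), ((c • s : ↥S) : G) = (c : G) * s.val * (c : G)⁻¹ :=
    fun _ _ => rfl
  letI : Fintype G := Fintype.ofFinite G
  letI : Fintype ↥P := Fintype.ofFinite _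
  letI : Fintype ↥S := Fintype.ofFinite _
  letI : ∀ c : ↥P, Fintype (fixedBy ↥S c) := fun _ => Fintype.ofFinite _
  letI : Fintype (orbitRel.Quotient ↥P ↥S) := Fintype.ofFinite _
  set F : ↥P → ℕ := fun c => Fintype.card (fixedBy ↥S c) with hF
  have hBurn : ∑ c : ↥P, F c
      = Fintype.card (orbitRel.Quotient ↥P ↥S) * Fintype.card ↥P :=
    MulAction.sum_card_fixedBy_eq_card_orbits_mul_card_group ↥P ↥S
  -- conjugation invariance of F
  have fixEquiv : ∀ (u c : P), (fixedBy ↥S c) ≃ (fixedBy ↥S (u * c * u⁻¹)) := by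
    intro u c
    refine
      { toFun := fun s => ⟨u • s.val, ?_⟩
        invFun := fun t => ⟨u⁻¹ • t.val, ?_⟩
        left_inv := fun s => Subtype.ext (inv_smul_smul u s.val)
        right_inv := fun t => Subtype.ext (smul_inv_smul u t.val) }
    · have hs : c • (s : ↥S) = (s : ↥S) := s.2
      show (u * c * u⁻¹) • (u • (s : ↥S)) = u • (s : ↥S)
      rw [← mul_smul]
      have h1 : u * c * u⁻¹ * u = u * c := by group
      rw [h1, mul_smul, hs]
    · have ht : (u * c * u⁻¹) • (t : ↥S) = (t : ↥S) := t.2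
      show c • (u⁻¹ • (t : ↥S)) = u⁻¹ • (t : ↥S)
      rw [← mul_smul]
      have h1 : c * u⁻¹ = u⁻¹ * (u * c * u⁻¹) := by group
      rw [h1, mul_smul, ht]
  have hclass : ∀ (u c : P), F (u * c * u⁻¹) = F c :=
    fun u c => (Fintype.card_congr (fixEquiv u c)).symm
  -- divisibility of F c by the centralizer of c in P, for c ≠ 1
  have hdvd : ∀ c : P, c ≠ 1 →
      Nat.card (MulAction.stabilizer (ConjAct ↥P) c) ∣ F c := by
    intro c hc
    have hcG : (c : G) ≠ 1 := by
      intro h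
      exact hc (by ext; exact h)
    have hcnotZ : (c : G) ∉ Subgroup.center G := by
      intro hz
      have hmem' : (c : G) ∈ P ⊓ Subgroup.center G := ⟨c.2, hz⟩
      rw [hPZ] at hmem'
      exact hcG (Subgroup.mem_bot.mp hmem')
    set K := Subgroup.centralizer {(c : G)} with hK
    have hxK : x ∈ K := by
      rw [Subgroup.mem_centralizer_iff]
      rintro h rfl
      exact hcom c
    have hKlt : Nat.card K < Nat.card G := by
      obtain ⟨g, hg⟩ : ∃ g, g ∉ K := by
        by_contra h
        push_neg at h
        apply hcnotZ
        rw [Subgroup.mem_center_iff]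
        intro g
        have := Subgroup.mem_centralizer_iff.mp (h g) (c : G) rfl
        exact this.symm ▸ this
      have hss : (K : Set G) ⊂ Set.univ :=
        ⟨Set.subset_univ _, fun habs => hg (habs (Set.mem_univ g))⟩
      have h2 := Set.ncard_lt_ncard hss Set.finite_univ
      rwa [Set.ncard_univ, ← Nat.card_coe_set_eq] at h2
    set x' : K := ⟨x, hxK⟩ with hx'
    set Q : Subgroup K := (P ⊓ K).subgroupOf K with hQdef
    have hQp : IsPGroup p Q :=
      (hP.to_inf_left (K := K)).of_equiv (Subgroup.subgroupOfEquivOfLe inf_le_right).symm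
    have hQx : Q ≤ Subgroup.centralizer {x'} := by
      intro q hq
      rw [Subgroup.mem_subgroupOf] at hq
      rw [Subgroup.mem_centralizer_iff]
      rintro h rfl
      ext
      exact Subgroup.mem_centralizer_iff.mp (hPx hq.1) x rfl
    have ihK := ih (Nat.card K) (lt_of_lt_of_le hKlt hcard) K le_rfl x' p Q hQx hQp
    -- stabilizer ≃ Q
    have toK : ∀ d : MulAction.stabilizer (ConjAct ↥P) c,
        ((ConjAct.ofConjAct d.val : P) : G) ∈ K := by
      intro d
      have hd := d.2
      rw [MulAction.mem_stabilizer_iff, ConjAct.smul_def, mul_inv_eq_iff_eq_mul] at hd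
      rw [Subgroup.mem_centralizer_iff]
      rintro h rfl
      exact (congrArg Subtype.val hd).symm
    have fromP : ∀ q : Q, q.val.val ∈ P := fun q => (Subgroup.mem_subgroupOf.mp q.2).1
    have fromStab : ∀ q : Q,
        ConjAct.toConjAct (⟨q.val.val, fromP q⟩ : P) ∈ MulAction.stabilizer (ConjAct ↥P) c := by
      intro q
      rw [MulAction.mem_stabilizer_iff, ConjAct.smul_def, ConjAct.ofConjAct_toConjAct,
        mul_inv_eq_iff_eq_mul]
      have hqK : q.val.val ∈ K := q.val.2
      have h2 := Subgroup.mem_centralizer_iff.mp hqK (c : G) rfl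
      ext
      exact h2.symm
    have e1 : (MulAction.stabilizer (ConjAct ↥P) c) ≃ ↥Q :=
      { toFun := fun d => ⟨⟨((ConjAct.ofConjAct d.val : P) : G), toK d⟩,
          Subgroup.mem_subgroupOf.mpr ⟨(ConjAct.ofConjAct d.val : P).2, toK d⟩⟩
        invFun := fun q => ⟨ConjAct.toConjAct (⟨q.val.val, fromP q⟩ : P), fromStab q⟩
        left_inv := fun d => by
          ext
          simp
        right_inv := fun q => by
          ext
          simp }
    -- fixedBy c ≃ solubilizer in K
    have fixK : ∀ s : fixedBy ↥S c, (s.val.val : G) ∈ K := by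
      intro s
      have hs : c • s.val = s.val := s.2
      have hval : (c : G) * s.val.val * (c : G)⁻¹ = s.val.val := congrArg Subtype.val hs
      rw [mul_inv_eq_iff_eq_mul] at hval
      rw [Subgroup.mem_centralizer_iff]
      rintro h rfl
      exact hval
    have solK : ∀ t : {g : K | IsSolvable (Subgroup.closure ({g, x'} : Set K))},
        (t.val.val : G) ∈ S := fun t => (sol_pair_subtype K t.val x').mp t.2
    have fixT : ∀ t : {g : K | IsSolvable (Subgroup.closure ({g, x'} : Set K))},
        (⟨t.val.val, solK t⟩ : ↥S) ∈ fixedBy ↥S c := by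
      intro t
      show c • (⟨t.val.val, solK t⟩ : ↥S) = _
      apply Subtype.ext
      show (c : G) * t.val.val * (c : G)⁻¹ = t.val.val
      rw [mul_inv_eq_iff_eq_mul]
      exact Subgroup.mem_centralizer_iff.mp t.val.2 (c : G) rfl
    have e2 : (fixedBy ↥S c) ≃
        {g : K | IsSolvable (Subgroup.closure ({g, x'} : Set K))} :=
      { toFun := fun s => ⟨⟨s.val.val, fixK s⟩, (sol_pair_subtype K _ x').mpr s.val.2⟩
        invFun := fun t => ⟨⟨t.val.val, solK t⟩, fixT t⟩
        left_inv := fun s => Subtype.ext (Subtype.ext rfl)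
        right_inv := fun t => Subtype.ext (Subtype.ext rfl) }
    calc Nat.card (MulAction.stabilizer (ConjAct ↥P) c)
        = Nat.card ↥Q := Nat.card_congr e1
      _ ∣ Nat.card {g : K | IsSolvable (Subgroup.closure ({g, x'} : Set K))} := ihK
      _ = F c := (Nat.card_congr e2.symm).trans Nat.card_eq_fintype_card
  -- summation over conjugacy classes of P
  letI : Fintype (ConjAct ↥P) := Fintype.ofFinite _
  letI : Fintype (orbitRel.Quotient (ConjAct ↥P) ↥P) := Fintype.ofFinite _
  letI : DecidableEq (orbitRel.Quotient (ConjAct ↥P) ↥P) := Classical.decEq _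
  have hfib : ∑ ω : orbitRel.Quotient (ConjAct ↥P) ↥P,
      ∑ c ∈ Finset.univ.filter (fun c : ↥P => (Quotient.mk'' c : orbitRel.Quotient (ConjAct ↥P) ↥P) = ω), F c
      = ∑ c : ↥P, F c :=
    Finset.sum_fiberwise_of_maps_to (fun c _ => Finset.mem_univ _) F
  have horb1 : Finset.univ.filter (fun c : ↥P =>
      (Quotient.mk'' c : orbitRel.Quotient (ConjAct ↥P) ↥P) = (Quotient.mk'' 1)) = {1} := by
    ext c
    simp only [Finset.mem_filter, Finset.mem_univ, true_and, Finset.mem_singleton]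
    constructor
    · intro h
      have hrel : c ∈ MulAction.orbit (ConjAct ↥P) (1 : ↥P) :=
        MulAction.orbitRel_apply.mp (Quotient.eq''.mp h)
      obtain ⟨d, hd⟩ := hrel
      rw [← hd]
      show d • (1 : ↥P) = 1
      rw [ConjAct.smul_def]
      simp
    · rintro rfl
      rfl
  have horb : ∀ ω : orbitRel.Quotient (ConjAct ↥P) ↥P, ω ≠ Quotient.mk'' 1 →
      Fintype.card ↥P ∣ ∑ c ∈ Finset.univ.filter
        (fun c : ↥P => (Quotient.mk'' c : orbitRel.Quotient (ConjAct ↥P) ↥P) = ω), F c := by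
    intro ω hω
    set c₀ : ↥P := Quotient.out ω with hc₀def
    have hc₀ : (Quotient.mk'' c₀ : orbitRel.Quotient (ConjAct ↥P) ↥P) = ω := ω.out_eq'
    have hc₀ne : c₀ ≠ 1 := by
      rintro h
      rw [h] at hc₀
      exact hω hc₀.symm
    have hconst : ∀ c ∈ Finset.univ.filter
        (fun c : ↥P => (Quotient.mk'' c : orbitRel.Quotient (ConjAct ↥P) ↥P) = ω), F c = F c₀ := by
      intro c hcmem
      rw [Finset.mem_filter] at hcmem
      have hrel : c ∈ MulAction.orbit (ConjAct ↥P) c₀ :=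
        MulAction.orbitRel_apply.mp (Quotient.eq''.mp (hcmem.2.trans hc₀.symm))
      obtain ⟨d, hd⟩ := hrel
      rw [← hd]
      show F (d • c₀) = F c₀
      rw [ConjAct.smul_def]
      exact hclass (ConjAct.ofConjAct d) c₀
    rw [Finset.sum_congr rfl hconst, Finset.sum_const, smul_eq_mul]
    letI : Fintype (MulAction.orbit (ConjAct ↥P) c₀) := Fintype.ofFinite _
    letI : Fintype (MulAction.stabilizer (ConjAct ↥P) c₀) := Fintype.ofFinite _
    have hfc : (Finset.univ.filter
        (fun c : ↥P => (Quotient.mk'' c : orbitRel.Quotient (ConjAct ↥P) ↥P) = ω)).card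
        = Fintype.card (MulAction.orbit (ConjAct ↥P) c₀) := by
      rw [← Fintype.card_subtype]
      exact Fintype.card_congr (Equiv.subtypeEquivRight (fun c => by
        constructor
        · intro h
          exact MulAction.orbitRel_apply.mp (Quotient.eq''.mp (h.trans hc₀.symm))
        · intro h
          rw [← hc₀]
          exact Quotient.sound' (MulAction.orbitRel_apply.mpr h)))
    have hos := MulAction.card_orbit_mul_card_stabilizer_eq_card_group (ConjAct ↥P) c₀
    have hcc : Fintype.card (ConjAct ↥P) = Fintype.card ↥P :=
      Fintype.card_congr ConjAct.ofConjAct.toEquiv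
    obtain ⟨k, hk⟩ := hdvd c₀ hc₀ne
    rw [Nat.card_eq_fintype_card] at hk
    rw [hfc, hk]
    refine ⟨k, ?_⟩
    rw [← mul_assoc, hos, hcc]
  have htot : Fintype.card ↥P ∣ ∑ c : ↥P, F c :=
    ⟨Fintype.card (orbitRel.Quotient ↥P ↥S), by rw [hBurn, mul_comm]⟩
  rw [← hfib] at htot
  rw [← Finset.add_sum_erase Finset.univ _
    (Finset.mem_univ (Quotient.mk'' 1 : orbitRel.Quotient (ConjAct ↥P) ↥P))] at htot
  have herase : Fintype.card ↥P ∣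
      ∑ ω ∈ Finset.univ.erase (Quotient.mk'' 1 : orbitRel.Quotient (ConjAct ↥P) ↥P),
        ∑ c ∈ Finset.univ.filter
          (fun c : ↥P => (Quotient.mk'' c : orbitRel.Quotient (ConjAct ↥P) ↥P) = ω), F c :=
    Finset.dvd_sum (fun ω hω => horb ω (Finset.ne_of_mem_erase hω))
  rw [add_comm] at htot
  have hF1 : Fintype.card ↥P ∣ F 1 := by
    have h1 := (Nat.dvd_add_right herase).mp htot
    rwa [horb1, Finset.sum_singleton] at h1
  have hfix1 : F 1 = Fintype.card ↥S := by
    have huniv : fixedBy ↥S (1 : ↥P) = Set.univ := by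
      ext s
      simp [MulAction.mem_fixedBy]
    show Fintype.card (fixedBy ↥S (1 : ↥P)) = Fintype.card ↥S
    rw [Fintype.card_congr (Equiv.setCongr huniv)]
    exact Fintype.card_congr (Equiv.Set.univ _)
  rw [Nat.card_eq_fintype_card, Nat.card_eq_fintype_card]
  rw [← hfix1]
  exact hF1

private theorem aux : ∀ (n : ℕ) (G : Type u) [Group G] [Finite G], Nat.card G ≤ n →
    ∀ (x : G) (p : ℕ) (P : Subgroup G), P ≤ Subgroup.centralizer {x} → IsPGroup p P →
    Nat.card P ∣ Nat.card {g : G | IsSolvable (Subgroup.closure ({g, x} : Set G))} := by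
  intro n
  induction n using Nat.strong_induction_on with
  | _ n ih =>
    intro G _ _ hcard x p P hPx hP
    by_cases hPZ : P ⊓ Subgroup.center G = ⊥
    · exact case2 n ih G hcard x p P hPx hP hPZ
    · -- Case 1 : P meets the center nontrivially; pass to the quotient
      set N := P ⊓ Subgroup.center G with hN
      have hNle : N ≤ Subgroup.center G := inf_le_right
      have hNleP : N ≤ P := inf_le_left
      haveI hNn : N.Normal := by
        constructor
        intro a ha g
        have hza := Subgroup.mem_center_iff.mp ha.2 g
        have : g * a * g⁻¹ = a := by rw [hza, mul_inv_cancel_right]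
        rw [this]; exact ha
      set π := QuotientGroup.mk' N with hπ
      have hπs : Function.Surjective π := QuotientGroup.mk'_surjective N
      have hSpre : {g : G | IsSolvable (Subgroup.closure ({g, x} : Set G))}
          = π ⁻¹' {q : G ⧸ N |
              IsSolvable (Subgroup.closure ({q, ((x : G) : G ⧸ N)} : Set (G ⧸ N)))} := by
        ext g
        exact sol_quot N hNle g x
      rw [hSpre, card_preimage_hom π hπs _, QuotientGroup.ker_mk']
      set φ := π.comp P.subtype with hφ
      have hPcard : Nat.card P = Nat.card φ.range * Nat.card N := by
        have h1 := Subgroup.card_eq_card_quotient_mul_card_subgroup (α := P) φ.ker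
        have h2 : Nat.card (P ⧸ φ.ker) = Nat.card φ.range :=
          Nat.card_congr (QuotientGroup.quotientKerEquivRange φ).toEquiv
        have h3 : Nat.card φ.ker = Nat.card N := by
          have : φ.ker = N.subgroupOf P := by
            ext q
            simp only [hφ, MonoidHom.mem_ker, MonoidHom.comp_apply, Subgroup.coe_subtype,
              Subgroup.mem_subgroupOf, QuotientGroup.mk'_apply, QuotientGroup.eq_one_iff]
            exact QuotientGroup.eq_one_iff _
          rw [this]
          exact Nat.card_congr (Subgroup.subgroupOfEquivOfLe hNleP).toEquiv
        rw [h1, h2, h3]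
      rw [hPcard]
      apply Nat.mul_dvd_mul _ dvd_rfl
      -- apply the inductive hypothesis to G ⧸ N
      have hNnontriv : 1 < Nat.card N := (Subgroup.one_lt_card_iff_ne_bot N).mpr hPZ
      have hQlt : Nat.card (G ⧸ N) < Nat.card G := by
        have h1 := Subgroup.card_eq_card_quotient_mul_card_subgroup (α := G) N
        have hpos : 0 < Nat.card (G ⧸ N) := Nat.card_pos
        calc Nat.card (G ⧸ N) = Nat.card (G ⧸ N) * 1 := (mul_one _).symm
          _ < Nat.card (G ⧸ N) * Nat.card N := by
              exact Nat.mul_lt_mul_of_le_of_lt (le_refl _) hNnontriv hpos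
          _ = Nat.card G := h1.symm
      have hrange : φ.range ≤ Subgroup.centralizer {((x : G) : G ⧸ N)} := by
        rintro - ⟨q, rfl⟩
        rw [Subgroup.mem_centralizer_iff]
        rintro h rfl
        have hq := Subgroup.mem_centralizer_iff.mp (hPx q.2) x rfl
        show ((x : G) : G ⧸ N) * φ q = φ q * ((x : G) : G ⧸ N)
        have : φ q = ((q : G) : G ⧸ N) := rfl
        rw [this, ← QuotientGroup.mk_mul, ← QuotientGroup.mk_mul, hq]
      have hpg : IsPGroup p φ.range := by
        have : φ.range = P.map π := by
          rw [hφ, MonoidHom.range_comp, Subgroup.range_subtype]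
        rw [this]
        exact hP.map π
      exact ih (Nat.card (G ⧸ N)) (lt_of_lt_of_le hQlt hcard) (G ⧸ N) le_rfl
        ((x : G) : G ⧸ N) p φ.range hrange hpg


private lemma sol_self' {G : Type*} [Group G] (x : G) :
    IsSolvable (Subgroup.closure ({x, x} : Set G)) := sol_self x

/-- For every finite group `G` and every `x ∈ G`, the order of the centralizer
`C_G(x)` divides the cardinality of the solvabilizer `sol_G(x)`. -/
theorem card_centralizer_dvd_card_solvabilizer (G : Type*) [Group G] [Finite G] (x : G) :
    Nat.card (Subgroup.centralizer ({x} : Set G)) ∣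
      Nat.card {g : G | IsSolvable ↥(Subgroup.closure ({g, x} : Set G))} := by
  classical
  set C := Subgroup.centralizer ({x} : Set G) with hC
  set S := {g : G | IsSolvable ↥(Subgroup.closure ({g, x} : Set G))} with hS
  have hxS : x ∈ S := sol_self x
  haveI : Nonempty ↥S := ⟨⟨x, hxS⟩⟩
  have hS0 : Nat.card ↥S ≠ 0 := Nat.card_pos.ne'
  have hC0 : Nat.card ↥C ≠ 0 := Nat.card_pos.ne'
  rw [← Nat.factorization_le_iff_dvd hC0 hS0, Finsupp.le_def]
  intro p
  by_cases hp : p.Prime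
  · haveI : Fact p.Prime := ⟨hp⟩
    rw [← Nat.Prime.pow_dvd_iff_le_factorization hp hS0]
    obtain ⟨Psyl⟩ := (Sylow.nonempty : Nonempty (Sylow p ↥C))
    have hcardP : Nat.card (Psyl : Subgroup ↥C) = p ^ (Nat.card ↥C).factorization p :=
      Sylow.card_eq_multiplicity Psyl
    set Pm : Subgroup G := (Psyl : Subgroup ↥C).map C.subtype with hPm
    have hcardPm : Nat.card Pm = p ^ (Nat.card ↥C).factorization p := by
      rw [← hcardP]
      exact (Nat.card_congr
        (Subgroup.equivMapOfInjective _ _ C.subtype_injective).toEquiv).symm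
    have hle : Pm ≤ C := Subgroup.map_subtype_le _
    have hpg : IsPGroup p Pm := Psyl.isPGroup'.map _
    have hdvd := aux (Nat.card G) G le_rfl x p Pm hle hpg
    rwa [hcardPm] at hdvd
  · simp [Nat.factorization_eq_zero_of_not_prime _ hp]
end

section
/- For every finite group G, the order |G| divides the sum over all x ∈ G of the cardinalities |sol_G(x)|. -/
open Subgroup MulAction

universe u

section SolvabilizerLemmas

variable {G : Type u} [Group G]

/-- Solvability of closure of a pair transfers along injective homs. -/
lemma solv_map_iff {H : Type*} [Group H] (f : G →* H) (hf : Function.Injective f) (g x : G) :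
    IsSolvable ↥(Subgroup.closure ({f g, f x} : Set H)) ↔
      IsSolvable ↥(Subgroup.closure ({g, x} : Set G)) := by
  have hmap : (Subgroup.closure ({g, x} : Set G)).map f
      = Subgroup.closure ({f g, f x} : Set H) := by
    rw [MonoidHom.map_closure]
    congr 1
    simp [Set.image_insert_eq]
  have e : ↥(Subgroup.closure ({g, x} : Set G)) ≃* ↥(Subgroup.closure ({f g, f x} : Set H)) :=
    hmap ▸ Subgroup.equivMapOfInjective _ f hf
  constructor
  · intro h
    haveI : Group.IsSolvable ↥(Subgroup.closure ({f g, f x} : Set H)) := h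
    exact solvable_of_solvable_injective (f := e.toMonoidHom) e.injective
  · intro h
    haveI : Group.IsSolvable ↥(Subgroup.closure ({g, x} : Set G)) := h
    exact solvable_of_solvable_injective (f := e.symm.toMonoidHom) e.symm.injective

lemma solv_le {P Q : Subgroup G} (h : P ≤ Q) (hQ : IsSolvable ↥Q) : IsSolvable ↥P := by
  haveI : Group.IsSolvable ↥Q := hQ
  exact solvable_of_solvable_injective (f := Subgroup.inclusion h) (Subgroup.inclusion_injective h)

lemma solv_quot_iff (Z : Subgroup G) [Z.Normal] (hZ : IsSolvable ↥Z) (g x : G) :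
    IsSolvable ↥(Subgroup.closure ({g, x} : Set G)) ↔
      IsSolvable ↥(Subgroup.closure ({((g : G) : G ⧸ Z), ((x : G) : G ⧸ Z)} : Set (G ⧸ Z))) := by
  set π := QuotientGroup.mk' Z with hπ
  constructor
  · intro h
    have hmap : (Subgroup.closure ({g, x} : Set G)).map π
        = Subgroup.closure ({(g : G ⧸ Z), (x : G ⧸ Z)} : Set (G ⧸ Z)) := by
      rw [MonoidHom.map_closure]
      congr 1
      simp [Set.image_insert_eq]
      rfl
    haveI : Group.IsSolvable ↥(Subgroup.closure ({g, x} : Set G)) := h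
    have hs := π.subgroupMap_surjective (Subgroup.closure ({g, x} : Set G))
    have : IsSolvable ↥((Subgroup.closure ({g, x} : Set G)).map π) :=
      solvable_of_surjective hs
    rwa [hmap] at this
  · intro h
    set c : Subgroup (G ⧸ Z) := Subgroup.closure ({(g : G ⧸ Z), (x : G ⧸ Z)} : Set (G ⧸ Z)) with hc
    set P : Subgroup G := c.comap π with hP
    have hZP : Z ≤ P := by
      intro z hz
      have : π z = 1 := (QuotientGroup.eq_one_iff z).mpr hz
      rw [Subgroup.mem_comap, this]
      exact c.one_mem
    have hle : Subgroup.closure ({g, x} : Set G) ≤ P := by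
      apply Subgroup.closure_le _ |>.mpr
      rintro y (rfl | rfl) <;>
      · rw [SetLike.mem_coe, Subgroup.mem_comap]
        exact Subgroup.subset_closure (by simp [π])
    have hPsolv : IsSolvable ↥P := by
      have φmem : ∀ p : P, π (p : G) ∈ c := fun p => p.2
      set φ : ↥P →* ↥c := (π.domRestrict P).codRestrict c φmem with hφ
      have hker : φ.ker ≤ (Subgroup.inclusion hZP).range := by
        rintro ⟨p, hp⟩ hmem
        have h1 : π p = 1 := by
          have := Subtype.ext_iff.mp hmem
          exact this
        have hpZ : p ∈ Z := (QuotientGroup.eq_one_iff p).mp h1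
        exact ⟨⟨p, hpZ⟩, rfl⟩
      haveI : Group.IsSolvable ↥Z := hZ
      haveI : Group.IsSolvable ↥c := h
      exact solvable_of_ker_le_range (Subgroup.inclusion hZP) φ hker
    exact solv_le hle hPsolv

lemma solv_conj_iff (u g x : G) :
    IsSolvable ↥(Subgroup.closure ({u * g * u⁻¹, u * x * u⁻¹} : Set G)) ↔
      IsSolvable ↥(Subgroup.closure ({g, x} : Set G)) := by
  have := solv_map_iff (G := G) (MulAut.conj u).toMonoidHom (MulAut.conj u).injective g x
  have key : ∀ y, (MulAut.conj u).toMonoidHom y = u * y * u⁻¹ := fun y => rfl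
  rw [key, key] at this
  exact this


end SolvabilizerLemmas

def SP (G : Type u) [Group G] : Type u :=
  {p : G × G // IsSolvable ↥(Subgroup.closure ({p.1, p.2} : Set G))}

instance {G : Type u} [Group G] [Finite G] : Finite (SP G) := by
  unfold SP; infer_instance


section Counting

variable {G : Type u} [Group G]

lemma my_card_sigma {ι : Type*} [Fintype ι] (f : ι → Type*) [∀ i, Finite (f i)] :
    Nat.card (Σ i, f i) = ∑ i, Nat.card (f i) := by
  have := fun i => Fintype.ofFinite (f i)
  simp only [Nat.card_eq_fintype_card]
  exact Fintype.card_sigma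

lemma card_subtype_comp {α β : Type*} [Finite α] [Finite β] (f : α → β) (P : β → Prop) (k : ℕ)
    (hf : ∀ b : β, Nat.card {a // f a = b} = k) :
    Nat.card {a // P (f a)} = k * Nat.card {b // P b} := by
  have e : {a // P (f a)} ≃ Σ b : {b // P b}, {a // f a = b.1} :=
    { toFun := fun a => ⟨⟨f a.1, a.2⟩, ⟨a.1, rfl⟩⟩
      invFun := fun s => ⟨s.2.1, by rw [s.2.2]; exact s.1.2⟩
      left_inv := fun a => rfl
      right_inv := fun ⟨⟨b, hb⟩, ⟨a, ha⟩⟩ => by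
        simp only at ha
        subst ha
        rfl }
  have := Fintype.ofFinite {b // P b}
  rw [Nat.card_congr e, my_card_sigma]
  simp only [hf]
  rw [Finset.sum_const, smul_eq_mul, mul_comm]
  congr 1
  exact (Nat.card_eq_fintype_card).symm.trans (by simp [Nat.card_eq_fintype_card])

lemma card_fiber_quot (Z : Subgroup G) [Z.Normal] (q : G ⧸ Z) :
    Nat.card {g : G // ((g : G ⧸ Z)) = q} = Nat.card Z := by
  have e1 : {g : G // ((g : G ⧸ Z)) = q} ≃ (QuotientGroup.mk ⁻¹' ({q} : Set (G ⧸ Z))) :=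
    Equiv.subtypeEquivRight (fun g => by simp)
  rw [Nat.card_congr e1, Nat.card_congr (QuotientGroup.preimageMkEquivSubgroupProdSet Z {q})]
  simp [Nat.card_prod]

lemma SP_card_quot [Finite G] (Z : Subgroup G) [Z.Normal] (hZ : IsSolvable ↥Z) :
    Nat.card (SP G) = (Nat.card Z * Nat.card Z) * Nat.card (SP (G ⧸ Z)) := by
  have e1 : SP G ≃ {p : G × G //
      IsSolvable ↥(Subgroup.closure ({((p.1 : G ⧸ Z)), ((p.2 : G ⧸ Z))} : Set (G ⧸ Z)))} :=
    Equiv.subtypeEquivRight (fun p => solv_quot_iff Z hZ p.1 p.2)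
  rw [Nat.card_congr e1]
  have := card_subtype_comp (α := G × G) (β := (G ⧸ Z) × (G ⧸ Z))
    (fun p => ((p.1 : G ⧸ Z), (p.2 : G ⧸ Z)))
    (fun b => IsSolvable ↥(Subgroup.closure ({b.1, b.2} : Set (G ⧸ Z))))
    (Nat.card Z * Nat.card Z) ?_
  · exact this
  · intro b
    have e2 : {a : G × G // ((a.1 : G ⧸ Z), (a.2 : G ⧸ Z)) = b}
        ≃ {g : G // ((g : G ⧸ Z)) = b.1} × {g : G // ((g : G ⧸ Z)) = b.2} :=
      { toFun := fun p => (⟨p.1.1, (Prod.ext_iff.mp p.2).1⟩, ⟨p.1.2, (Prod.ext_iff.mp p.2).2⟩),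
        invFun := fun q => ⟨(q.1.1, q.2.1), Prod.ext_iff.mpr ⟨q.1.2, q.2.2⟩⟩,
        left_inv := fun p => Subtype.ext rfl,
        right_inv := fun q => Prod.ext (Subtype.ext rfl) (Subtype.ext rfl) }
    rw [Nat.card_congr e2, Nat.card_prod, card_fiber_quot, card_fiber_quot]

end Counting

section ConjAction

variable {G : Type u} [Group G]

instance : MulAction (ConjAct G) (SP G) where
  smul := fun t p => ⟨(t • p.1.1, t • p.1.2), by
    simp only [ConjAct.smul_def]
    exact (solv_conj_iff _ _ _).mpr p.2⟩
  one_smul := fun p => Subtype.ext (Prod.ext (one_smul _ _) (one_smul _ _))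
  mul_smul := fun t s p => Subtype.ext (Prod.ext (mul_smul t s p.1.1) (mul_smul t s p.1.2))

lemma sp_smul_fst (t : ConjAct G) (p : SP G) : (t • p).1 = (t • p.1.1, t • p.1.2) := rfl

/-- fixed points of conjugates have the same cardinality -/
lemma card_fixedBy_conj {A X : Type*} [Group A] [MulAction A X] (a b : A) :
    Nat.card (fixedBy X (b * a * b⁻¹)) = Nat.card (fixedBy X a) := by
  apply Nat.card_congr
  refine { toFun := fun x => ⟨b⁻¹ • x.1, ?_⟩, invFun := fun y => ⟨b • y.1, ?_⟩,
           left_inv := fun x => by simp, right_inv := fun y => by simp }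
  · have hx := x.2
    rw [mem_fixedBy] at hx ⊢
    have := congrArg (fun z => b⁻¹ • z) hx
    simp only [mul_smul] at this ⊢
    simpa [smul_smul] using this
  · have hy := y.2
    rw [mem_fixedBy] at hy ⊢
    simp only [mul_smul]
    simp [hy]

set_option maxHeartbeats 2000000 in
lemma card_fixedBy_eq_SP_centralizer (t : G) :
    Nat.card (fixedBy (SP G) (ConjAct.toConjAct t))
      = Nat.card (SP ↥(Subgroup.centralizer ({t} : Set G))) := by
  set C := Subgroup.centralizer ({t} : Set G) with hC
  apply Nat.card_congr
  have mem_iff : ∀ (g : G), ConjAct.toConjAct t • g = g ↔ g ∈ C := by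
    intro g
    rw [ConjAct.smul_def, ConjAct.ofConjAct_toConjAct, hC, Subgroup.mem_centralizer_iff]
    constructor
    · intro h y hy
      rcases hy with rfl
      rw [mul_inv_eq_iff_eq_mul] at h
      exact h
    · intro h
      rw [mul_inv_eq_iff_eq_mul]
      exact h t rfl
  have memfix : ∀ p : SP G, p ∈ fixedBy (SP G) (ConjAct.toConjAct t) ↔
      (p.1.1 ∈ C ∧ p.1.2 ∈ C) := by
    intro p
    rw [mem_fixedBy]
    constructor
    · intro h
      have := congrArg Subtype.val h
      rw [sp_smul_fst] at this
      exact ⟨(mem_iff _).mp (congrArg Prod.fst this), (mem_iff _).mp (congrArg Prod.snd this)⟩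
    · intro ⟨h1, h2⟩
      apply Subtype.ext
      rw [sp_smul_fst]
      exact Prod.ext ((mem_iff _).mpr h1) ((mem_iff _).mpr h2)
  refine { toFun := fun p => ⟨(⟨p.1.1.1, ((memfix p.1).mp p.2).1⟩,
              ⟨p.1.1.2, ((memfix p.1).mp p.2).2⟩),
              (solv_map_iff C.subtype C.subtype_injective _ _).mp p.1.2⟩,
           invFun := fun q => ⟨⟨((q.1.1 : G), (q.1.2 : G)),
              (solv_map_iff C.subtype C.subtype_injective _ _).mpr q.2⟩,
              (memfix _).mpr ⟨q.1.1.2, q.1.2.2⟩⟩,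
           left_inv := ?_, right_inv := ?_ }
  · intro p
    apply Subtype.ext
    apply Subtype.ext
    rfl
  · intro q
    apply Subtype.ext
    apply Prod.ext
    · apply Subtype.ext
      rfl
    · apply Subtype.ext
      rfl

lemma card_stabilizer_conjAct (t : G) :
    Nat.card (stabilizer (ConjAct G) t) = Nat.card (Subgroup.centralizer ({t} : Set G)) := by
  apply Nat.card_congr
  have h : ∀ a : ConjAct G, a ∈ stabilizer (ConjAct G) t ↔
      ConjAct.ofConjAct a ∈ Subgroup.centralizer ({t} : Set G) := by
    intro a
    rw [mem_stabilizer_iff, ConjAct.smul_def, Subgroup.mem_centralizer_iff]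
    constructor
    · intro hh y hy
      rcases hy with rfl
      rw [mul_inv_eq_iff_eq_mul] at hh
      exact hh.symm
    · intro hh
      rw [mul_inv_eq_iff_eq_mul]
      exact (hh t rfl).symm
  exact { toFun := fun a => ⟨ConjAct.ofConjAct a.1, (h a.1).mp a.2⟩,
          invFun := fun u => ⟨ConjAct.toConjAct u.1, (h _).mpr (by simpa using u.2)⟩,
          left_inv := fun a => Subtype.ext (by simp),
          right_inv := fun u => Subtype.ext (by simp) }

lemma classfun_dvd [Fintype G] (f : G → ℕ)
    (hconj : ∀ s t : G, f (s * t * s⁻¹) = f t)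
    (hdvd : ∀ t : G, Nat.card (Subgroup.centralizer ({t} : Set G)) ∣ f t) :
    Nat.card G ∣ ∑ t : G, f t := by
  classical
  letI : Fintype (ConjAct G) := Fintype.ofEquiv G ConjAct.toConjAct.toEquiv
  letI : Fintype (orbitRel.Quotient (ConjAct G) G) := Fintype.ofFinite _
  have key : ∀ t : G, f t = f ((selfEquivSigmaOrbits (ConjAct G) G t).2 : G) := by
    intro t
    rfl
  rw [Fintype.sum_equiv (selfEquivSigmaOrbits (ConjAct G) G) f
    (fun σ => f (σ.2 : G)) key]
  rw [← Finset.univ_sigma_univ, Finset.sum_sigma]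
  apply Finset.dvd_sum
  intro ω _
  have horb : ∀ y : orbit (ConjAct G) ω.out, f (y : G) = f ω.out := by
    intro y
    rcases y.2 with ⟨a, ha⟩
    have hval : (y : G) = ConjAct.ofConjAct a * ω.out * (ConjAct.ofConjAct a)⁻¹ := by
      rw [← ConjAct.smul_def]
      exact ha.symm
    rw [hval]
    exact hconj _ _
  rw [Finset.sum_congr rfl (fun y _ => horb y), Finset.sum_const, smul_eq_mul,
    Finset.card_univ]
  have hos := card_orbit_mul_card_stabilizer_eq_card_group (ConjAct G) ω.out
  have h1 : Nat.card G = Fintype.card (orbit (ConjAct G) ω.out)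
      * Nat.card (stabilizer (ConjAct G) ω.out) := by
    rw [Nat.card_congr (ConjAct.toConjAct.toEquiv (M := G)), Nat.card_eq_fintype_card,
      Nat.card_eq_fintype_card, hos]
  rw [h1]
  exact Nat.mul_dvd_mul dvd_rfl ((card_stabilizer_conjAct ω.out) ▸ hdvd ω.out)

lemma burnside_step [Fintype G] (hcent : Subgroup.center G = ⊥)
    (IH : ∀ t : G, t ≠ 1 →
      Nat.card (Subgroup.centralizer ({t} : Set G))
        ∣ Nat.card (SP ↥(Subgroup.centralizer ({t} : Set G)))) :
    Nat.card G ∣ Nat.card (SP G) := by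
  classical
  letI : Fintype (ConjAct G) := Fintype.ofEquiv G ConjAct.toConjAct.toEquiv
  letI : Fintype (SP G) := Fintype.ofFinite _
  letI : ∀ a : ConjAct G, Fintype (fixedBy (SP G) a) := fun a => Fintype.ofFinite _
  letI : Fintype (orbitRel.Quotient (ConjAct G) (SP G)) := Fintype.ofFinite _
  have hburn := sum_card_fixedBy_eq_card_orbits_mul_card_group (ConjAct G) (SP G)
  set F : G → ℕ := fun t => Nat.card (fixedBy (SP G) (ConjAct.toConjAct t)) with hF
  have hdvd1 : Nat.card G ∣ ∑ t : G, F t := by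
    have hre : ∑ t : G, F t = ∑ a : ConjAct G, Fintype.card (fixedBy (SP G) a) :=
      Fintype.sum_equiv (ConjAct.toConjAct.toEquiv (M := G)) _ _
        (fun t => Nat.card_eq_fintype_card)
    rw [hre, hburn]
    have hcG : Nat.card G = Fintype.card (ConjAct G) := by
      rw [Nat.card_congr (ConjAct.toConjAct.toEquiv (M := G)), Nat.card_eq_fintype_card]
    rw [hcG]
    exact dvd_mul_left _ _
  have hsplit : ∑ t : G, F t = F 1 + ∑ t : G, (if t = 1 then 0 else F t) := by
    have hpt : ∀ t : G, F t = (if t = 1 then F 1 else 0) + (if t = 1 then 0 else F t) := by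
      intro t
      by_cases h : t = 1 <;> simp [h]
    rw [Finset.sum_congr rfl (fun t _ => hpt t), Finset.sum_add_distrib,
      Finset.sum_ite_eq' Finset.univ (1 : G) (fun _ => F 1)]
    simp
  have hF1 : F 1 = Nat.card (SP G) := by
    apply Nat.card_congr
    apply Equiv.subtypeUnivEquiv
    intro p
    show ConjAct.toConjAct (1 : G) • p = p
    rw [map_one, one_smul]
  have hdvd2 : Nat.card G ∣ ∑ t : G, (if t = 1 then 0 else F t) := by
    apply classfun_dvd
    · intro s t
      by_cases h : t = 1
      · simp [h]
      · have h' : s * t * s⁻¹ ≠ 1 := by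
          intro hh
          apply h
          have ht : t = s⁻¹ * (s * t * s⁻¹) * s := by group
          rw [hh] at ht
          simpa using ht
        rw [if_neg h', if_neg h]
        show Nat.card (fixedBy (SP G) (ConjAct.toConjAct (s * t * s⁻¹)))
            = Nat.card (fixedBy (SP G) (ConjAct.toConjAct t))
        have hmul : ConjAct.toConjAct (s * t * s⁻¹)
            = ConjAct.toConjAct s * ConjAct.toConjAct t * (ConjAct.toConjAct s)⁻¹ := by
          simp [map_mul]
        rw [hmul]
        exact card_fixedBy_conj _ _
    · intro t
      by_cases h : t = 1
      · simp [h]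
      · rw [if_neg h]
        show Nat.card (Subgroup.centralizer ({t} : Set G))
            ∣ Nat.card (fixedBy (SP G) (ConjAct.toConjAct t))
        rw [card_fixedBy_eq_SP_centralizer]
        exact IH t h
  rw [hsplit] at hdvd1
  rw [← hF1]
  exact (Nat.dvd_add_right hdvd2).mp (by rwa [add_comm] at hdvd1)

end ConjAction

theorem SP_dvd : ∀ (n : ℕ) (G : Type u) [Group G] [Finite G],
    Nat.card G ≤ n → Nat.card G ∣ Nat.card (SP G) := by
  intro n
  induction n with
  | zero =>
    intro G _ _ hle
    have : 0 < Nat.card G := Nat.card_pos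
    omega
  | succ n IHn =>
    intro G _ _ hle
    by_cases hcent : Subgroup.center G = ⊥
    · letI := Fintype.ofFinite G
      apply burnside_step hcent
      intro t ht
      have hCne : Subgroup.centralizer ({t} : Set G) ≠ ⊤ := by
        intro hEq
        rw [Subgroup.centralizer_eq_top_iff_subset] at hEq
        have : t ∈ Subgroup.center G := hEq rfl
        rw [hcent] at this
        exact ht (Subgroup.mem_bot.mp this)
      have hdvd := Subgroup.card_subgroup_dvd_card (Subgroup.centralizer ({t} : Set G))
      have hne : Nat.card (Subgroup.centralizer ({t} : Set G)) ≠ Nat.card G := by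
        intro hEq
        exact hCne (Subgroup.eq_top_of_card_eq _ hEq)
      have hlt : Nat.card (Subgroup.centralizer ({t} : Set G)) < Nat.card G :=
        lt_of_le_of_ne (Nat.le_of_dvd Nat.card_pos hdvd) hne
      exact IHn _ (by omega)
    · set Z := Subgroup.center G with hZdef
      have hZsolv : IsSolvable ↥Z := Group.isSolvable_of_comm (fun a b => Subtype.ext (Subgroup.mem_center_iff.mp a.2 b).symm)
      have hZ1 : 1 < Nat.card Z := (Subgroup.one_lt_card_iff_ne_bot Z).mpr hcent
      have hcard : Nat.card G = Nat.card (G ⧸ Z) * Nat.card Z :=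
        Subgroup.card_eq_card_quotient_mul_card_subgroup Z
      have hQpos : 0 < Nat.card (G ⧸ Z) := Nat.card_pos
      have hQlt : Nat.card (G ⧸ Z) < Nat.card G := by
        calc Nat.card (G ⧸ Z) = Nat.card (G ⧸ Z) * 1 := (mul_one _).symm
        _ < Nat.card (G ⧸ Z) * Nat.card Z := by
            exact Nat.mul_lt_mul_of_le_of_lt le_rfl hZ1 hQpos
        _ = Nat.card G := hcard.symm
      have IHQ := IHn (G ⧸ Z) (by omega)
      obtain ⟨k, hk⟩ := IHQ
      rw [SP_card_quot Z hZsolv, hcard, hk]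
      exact ⟨Nat.card Z * k, by ring⟩

/-- For every finite group `G`, the order `|G|` divides the sum over all `x ∈ G` of
the cardinalities `|sol_G(x)|`. -/
theorem card_dvd_sum_card_solvabilizers (G : Type*) [Group G] [Fintype G] :
    Fintype.card G ∣
      ∑ x : G, Nat.card {g : G | IsSolvable ↥(Subgroup.closure ({g, x} : Set G))} := by
  classical
  have hmain := SP_dvd (Nat.card G) G le_rfl
  have hsig : SP G ≃ Σ x : G, {g : G | IsSolvable ↥(Subgroup.closure ({g, x} : Set G))} :=
    { toFun := fun p => ⟨p.1.2, ⟨p.1.1, p.2⟩⟩,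
      invFun := fun s => ⟨(s.2.1, s.1), s.2.2⟩,
      left_inv := fun p => rfl,
      right_inv := fun s => rfl }
  have hcards : Nat.card (SP G) = ∑ x : G, Nat.card {g : G | IsSolvable ↥(Subgroup.closure ({g, x} : Set G))} := by
    rw [Nat.card_congr hsig]
    have := fun x : G => Fintype.ofFinite {g : G | IsSolvable ↥(Subgroup.closure ({g, x} : Set G))}
    simp only [Nat.card_eq_fintype_card]
    exact Fintype.card_sigma
  rw [← hcards, ← Nat.card_eq_fintype_card]
  exact hmain
end

section
/- Let G be a finite group and N a solvable normal subgroup of G. For every x ∈ G, the solvabilizer of the coset xN in the quotient G/N equals the image of sol_G(x) under the quotient map; that is, {gN ∈ G/N : ⟨gN, xN⟩ is solvable} = {gN : g ∈ sol_G(x)}. -/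
/-- Let `G` be a finite group and `N` a solvable normal subgroup of `G`. For every
`x ∈ G`, the solvabilizer of the coset `xN` in `G/N` equals the image of `sol_G(x)`
under the quotient map. -/
theorem solvabilizer_quotient_eq_image (G : Type*) [Group G] [Finite G]
    (N : Subgroup G) [N.Normal] (hN : IsSolvable N) (x : G) :
    {q : G ⧸ N | IsSolvable ↥(Subgroup.closure ({q, (x : G ⧸ N)} : Set (G ⧸ N)))} =
      (QuotientGroup.mk : G → G ⧸ N) ''
        {g : G | IsSolvable ↥(Subgroup.closure ({g, x} : Set G))} := by
  ext q
  have π := QuotientGroup.mk' N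
  constructor
  · intro hq
    obtain ⟨g, rfl⟩ := QuotientGroup.mk'_surjective N q
    refine ⟨g, ?_, rfl⟩
    -- H := closure {g, x}
    set H := Subgroup.closure ({g, x} : Set G) with hH
    -- the restriction of the quotient map to H
    let f : H →* G ⧸ N := (QuotientGroup.mk' N).domRestrict H
    -- the image of H is the closure of {q, x}
    have hmap : Subgroup.map (QuotientGroup.mk' N) H =
        Subgroup.closure ({(QuotientGroup.mk' N) g, (x : G ⧸ N)} : Set (G ⧸ N)) := by
      rw [hH, MonoidHom.map_closure]
      congr 1
      simp [Set.image_insert_eq]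
    have hrange : f.range = Subgroup.map (QuotientGroup.mk' N) H := by
      ext y
      simp [f, MonoidHom.domRestrict, Subgroup.mem_map, MonoidHom.mem_range, Subtype.exists]
    -- range of f is solvable
    have hRangeSolv : Group.IsSolvable f.range := by
      rw [hrange, hmap]
      exact hq
    -- kernel of rangeRestrict is N.subgroupOf H, solvable
    have hKerSolv : Group.IsSolvable (N.subgroupOf H) := by
      have : Group.IsSolvable N := hN
      refine solvable_of_solvable_injective (f := H.subtype.subgroupComap N) ?_
      intro a b hab
      have h1 : ((H.subtype.subgroupComap N) a : G) = ((H.subtype.subgroupComap N) b : G) :=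
        congrArg Subtype.val hab
      exact Subtype.ext (Subtype.ext h1)
    refine solvable_of_ker_le_range (N.subgroupOf H).subtype f.rangeRestrict ?_
    intro h hh
    have : (h : G) ∈ N := by
      have : f h = 1 := by
        have h2 := congrArg Subtype.val (MonoidHom.mem_ker.mp hh)
        exact h2
      exact (QuotientGroup.eq_one_iff _).mp this
    exact ⟨⟨h, this⟩, rfl⟩
  · rintro ⟨g, hg, rfl⟩
    -- closure {mk g, mk x} is the image of closure {g,x}, solvable as surjective image
    have hmap : Subgroup.map (QuotientGroup.mk' N) (Subgroup.closure ({g, x} : Set G)) =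
        Subgroup.closure ({(QuotientGroup.mk g : G ⧸ N), (x : G ⧸ N)} : Set (G ⧸ N)) := by
      rw [MonoidHom.map_closure]
      congr 1
      simp [Set.image_insert_eq]
    rw [Set.mem_setOf_eq, ← hmap]
    haveI : Group.IsSolvable (Subgroup.closure ({g, x} : Set G)) := hg
    set H := Subgroup.closure ({g, x} : Set G)
    let f : H →* Subgroup.map (QuotientGroup.mk' N) H :=
      ((QuotientGroup.mk' N).domRestrict H).codRestrict _ (by
        rintro ⟨h, hh⟩
        exact ⟨h, hh, rfl⟩)
    refine solvable_of_surjective (f := f) ?_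
    rintro ⟨y, h, hh, rfl⟩
    exact ⟨⟨h, hh⟩, rfl⟩
end

section
/- Let G be a finite group. For every x ∈ G, the order O(x) of the element x divides the cardinality |sol_G(x)|. -/
set_option maxHeartbeats 800000

open Subgroup MulAction

private lemma solv_closure_mul {G : Type*} [Group G] {x g h : G}
    (hh : h ∈ Subgroup.zpowers x)
    (hg : IsSolvable ↥(Subgroup.closure ({g, x} : Set G))) :
    IsSolvable ↥(Subgroup.closure ({h * g, x} : Set G)) := by
  have hle : Subgroup.closure ({h * g, x} : Set G) ≤ Subgroup.closure ({g, x} : Set G) := by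
    rw [Subgroup.closure_le]
    rintro a (rfl | rfl)
    · exact mul_mem (Subgroup.zpowers_le.mpr
        (Subgroup.subset_closure (by simp)) hh)
        (Subgroup.subset_closure (by simp))
    · exact Subgroup.subset_closure (by simp)
  exact @solvable_of_solvable_injective _ _ _ _ _
    (Subgroup.inclusion_injective hle) hg

/-- Let `G` be a finite group. For every `x ∈ G`, the order of `x` divides the
cardinality `|sol_G(x)|`. -/
theorem orderOf_dvd_card_solvabilizer (G : Type*) [Group G] [Finite G] (x : G) :
    orderOf x ∣ Nat.card {g : G | IsSolvable ↥(Subgroup.closure ({g, x} : Set G))} := by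
  classical
  set S := {g : G | IsSolvable ↥(Subgroup.closure ({g, x} : Set G))} with hS
  set H := Subgroup.zpowers x with hH
  letI : SMul H S := ⟨fun h g => ⟨h.1 * g.1, solv_closure_mul h.2 g.2⟩⟩
  have smul_def : ∀ (h : H) (g : S), ((h • g : S) : G) = h.1 * g.1 := fun _ _ => rfl
  letI : MulAction H S :=
    { one_smul := fun g => Subtype.ext (one_mul (g : G))
      mul_smul := fun a b g => Subtype.ext (mul_assoc (a : G) b g) }
  have hstab : ∀ g : S, stabilizer H g = ⊥ := by
    intro g
    ext h
    simp only [Subgroup.mem_bot, MulAction.mem_stabilizer_iff]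
    constructor
    · intro hh
      have h1 : (h : G) * g = g := congrArg Subtype.val hh
      have h2 : (h : G) = 1 := by
        have := h1.trans (one_mul (g : G)).symm
        exact mul_right_cancel this
      exact Subtype.ext h2
    · rintro rfl; exact one_smul H g
  have e1 := MulAction.selfEquivSigmaOrbitsQuotientStabilizer H S
  have e2 : (Σ ω : Quotient (orbitRel H S), H ⧸ stabilizer H ω.out) ≃
      Quotient (orbitRel H S) × H :=
by
    refine (Equiv.sigmaCongrRight fun ω => ?_).trans (Equiv.sigmaEquivProd _ _)
    exact (Subgroup.quotientEquivOfEq (hstab ω.out)).trans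
      (QuotientGroup.quotientBot (G := ↥H)).toEquiv
  have hcard : Nat.card S = Nat.card (Quotient (orbitRel H S)) * Nat.card H := by
    rw [Nat.card_congr (e1.trans e2), Nat.card_prod]
  rw [hcard, ← Nat.card_zpowers x]
  exact Dvd.intro_left _ rfl
end

section
/- Let G be a finite group and x ∈ G with x ∉ Sol(G). Then the order O(x) of x is strictly less than deg(x), the number of elements y ∈ G such that ⟨x,y⟩ is not solvable. -/
open Subgroup
open scoped commutatorElement

private lemma closure_pair_eq {G : Type*} [Group G] {x y z : G}
    (hz : z ∈ closure ({x, y} : Set G)) (hy : y ∈ closure ({x, z} : Set G)) :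
    closure ({x, z} : Set G) = closure ({x, y} : Set G) := by
  apply le_antisymm <;> rw [closure_le] <;> rintro a (rfl | rfl)
  · exact subset_closure (Set.mem_insert _ _)
  · exact hz
  · exact subset_closure (Set.mem_insert _ _)
  · exact hy

private lemma solvable_closure_of_normalizer {G : Type*} [Group G] {x y : G}
    (hy : y ∈ (Subgroup.normalizer ((zpowers x : Subgroup G) : Set G))) :
    IsSolvable ↥(closure ({x, y} : Set G)) := by
  set Z := zpowers x with hZ
  have hxN : x ∈ (Subgroup.normalizer (Z : Set G)) := Subgroup.le_normalizer (mem_zpowers x)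
  haveI : (Z.subgroupOf (Subgroup.normalizer (Z : Set G))).Normal := Subgroup.normal_in_normalizer
  set q := QuotientGroup.mk' (Z.subgroupOf (Subgroup.normalizer (Z : Set G))) with hq
  set K := closure ({x, y} : Set G) with hK
  have key : ∀ a ∈ K, ∀ b ∈ K, ⁅a, b⁆ ∈ Z := by
    have hT : K ≤ Subgroup.map (Subgroup.normalizer (Z : Set G)).subtype
        ((zpowers (q ⟨y, hy⟩)).comap q) := by
      rw [hK, closure_le]
      rintro a (rfl | rfl)
      · refine ⟨⟨a, hxN⟩, ?_, rfl⟩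
        simp only [SetLike.mem_coe, Subgroup.mem_comap]
        have h1 : q ⟨a, hxN⟩ = 1 := by
          rw [hq, QuotientGroup.mk'_apply, QuotientGroup.eq_one_iff]
          exact Subgroup.mem_subgroupOf.2 (mem_zpowers a)
        rw [h1]; exact one_mem _
      · exact ⟨⟨a, hy⟩, Subgroup.mem_comap.2 (mem_zpowers _), rfl⟩
    intro a ha b hb
    obtain ⟨a', ha', rfl⟩ := hT ha
    obtain ⟨b', hb', rfl⟩ := hT hb
    simp only [SetLike.mem_coe, Subgroup.mem_comap] at ha' hb'
    have hcomm : Commute (q a') (q b') := by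
      obtain ⟨m, hm⟩ := ha'
      obtain ⟨n, hn⟩ := hb'
      rw [← hm, ← hn]
      exact (Commute.refl _).zpow_zpow m n
    have hker : a' * b' * a'⁻¹ * b'⁻¹ ∈ Z.subgroupOf (Subgroup.normalizer (Z : Set G)) := by
      have h2 : q (a' * b' * a'⁻¹ * b'⁻¹) = 1 := by
        have h3 : q (a' * b' * a'⁻¹ * b'⁻¹)
            = q a' * q b' * (q a')⁻¹ * (q b')⁻¹ := by simp
        rw [h3, hcomm.eq]; group
      rwa [hq, QuotientGroup.mk'_apply, QuotientGroup.eq_one_iff] at h2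
    rw [Subgroup.mem_subgroupOf] at hker
    simpa [commutatorElement_def] using hker
  have hD1 : ⁅(⊤ : Subgroup ↥K), ⊤⁆ ≤ Z.subgroupOf K := by
    rw [Subgroup.commutator_le]
    intro p _ r _
    rw [Subgroup.mem_subgroupOf]
    simpa [commutatorElement_def] using key p p.2 r r.2
  have hD2 : ⁅Z.subgroupOf K, Z.subgroupOf K⁆ ≤ ⊥ := by
    rw [Subgroup.commutator_le]
    intro p hp r hr
    rw [Subgroup.mem_subgroupOf] at hp hr
    obtain ⟨m, hm⟩ := hp
    obtain ⟨n, hn⟩ := hr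
    have hc : Commute (p : G) (r : G) := by
      rw [← hm, ← hn]; exact (Commute.refl x).zpow_zpow m n
    have h4 : ⁅p, r⁆ = 1 := by
      rw [commutatorElement_eq_one_iff_commute]
      exact Subtype.ext (by simpa using hc.eq)
    simp [h4, Subgroup.mem_bot]
  refine ⟨⟨2, ?_⟩⟩
  rw [show (2:ℕ) = 1 + 1 from rfl, derivedSeries_succ, derivedSeries_succ,
    derivedSeries_zero]
  exact le_bot_iff.1 (le_trans (commutator_mono hD1 hD1) hD2)

/-- Let `G` be a finite group and `x ∉ Sol(G)`. Then the order of `x` is strictly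
less than `deg(x)`, the number of `y ∈ G` with `⟨x, y⟩` not solvable. -/
theorem orderOf_lt_degree (G : Type*) [Group G] [Finite G] (x : G)
    (hx : ¬ (∀ z : G, IsSolvable ↥(Subgroup.closure ({x, z} : Set G)))) :
    orderOf x < Nat.card {y : G | ¬ IsSolvable ↥(Subgroup.closure ({x, y} : Set G))} := by
  push_neg at hx
  obtain ⟨y, hy⟩ := hx
  set S : Set G := {y : G | ¬ IsSolvable ↥(Subgroup.closure ({x, y} : Set G))} with hS
  have hxK : x ∈ closure ({x, y} : Set G) := subset_closure (Set.mem_insert _ _)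
  have hyK : y ∈ closure ({x, y} : Set G) := subset_closure (Set.mem_insert_of_mem _ rfl)
  -- coset elements are bad
  have hcos : ∀ i : ℤ, closure ({x, x ^ i * y} : Set G) = closure ({x, y} : Set G) := by
    intro i
    refine closure_pair_eq (mul_mem (zpow_mem hxK i) hyK) ?_
    have hx' : x ∈ closure ({x, x ^ i * y} : Set G) := subset_closure (Set.mem_insert _ _)
    have hz' : x ^ i * y ∈ closure ({x, x ^ i * y} : Set G) :=
      subset_closure (Set.mem_insert_of_mem _ rfl)
    have := mul_mem (zpow_mem hx' (-i)) hz'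
    simpa [← mul_assoc, ← zpow_add] using this
  have hbad : ∀ i : ℤ, (x ^ i * y) ∈ S := by
    intro i
    simp only [hS, Set.mem_setOf_eq]
    rw [hcos i]
    exact hy
  -- injection Fin (orderOf x) → S
  let f : Fin (orderOf x) → ↥S := fun i => ⟨x ^ (i : ℕ) * y, by
    have := hbad (i : ℕ)
    simpa [zpow_natCast] using this⟩
  have hfinj : Function.Injective f := by
    intro i j hij
    have h1 : x ^ (i : ℕ) * y = x ^ (j : ℕ) * y := congrArg Subtype.val hij
    have h2 : x ^ (i : ℕ) = x ^ (j : ℕ) := mul_right_cancel h1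
    exact Fin.ext (pow_injOn_Iio_orderOf i.2 j.2 h2)
  by_contra hlt
  push_neg at hlt
  have hcard : Nat.card ↥S = orderOf x := by
    have h1 : orderOf x ≤ Nat.card ↥S := by
      simpa using Nat.card_le_card_of_injective f hfinj
    omega
  have hfsurj : Function.Surjective f := by
    refine ((Nat.bijective_iff_injective_and_card f).2 ⟨hfinj, ?_⟩).2
    simp [hcard]
  -- every bad element is x^i * y
  have hmem : ∀ z ∈ S, ∃ i : ℕ, z = x ^ i * y := by
    intro z hz
    obtain ⟨i, hi⟩ := hfsurj ⟨z, hz⟩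
    exact ⟨i, (congrArg Subtype.val hi).symm⟩
  -- x * y * x⁻¹ and y⁻¹ are bad
  have hbad1 : x * y * x⁻¹ ∈ S := by
    have hcl : closure ({x, x * y * x⁻¹} : Set G) = closure ({x, y} : Set G) := by
      refine closure_pair_eq (mul_mem (mul_mem hxK hyK) (inv_mem hxK)) ?_
      have hx' : x ∈ closure ({x, x * y * x⁻¹} : Set G) := subset_closure (Set.mem_insert _ _)
      have hz' : x * y * x⁻¹ ∈ closure ({x, x * y * x⁻¹} : Set G) :=
        subset_closure (Set.mem_insert_of_mem _ rfl)
      have := mul_mem (mul_mem (inv_mem hx') hz') hx'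
      simpa [mul_assoc] using this
    simp only [hS, Set.mem_setOf_eq]
    rw [hcl]
    exact hy
  have hbad2 : y⁻¹ ∈ S := by
    have hcl : closure ({x, y⁻¹} : Set G) = closure ({x, y} : Set G) := by
      refine closure_pair_eq (inv_mem hyK) ?_
      have hz' : y⁻¹ ∈ closure ({x, y⁻¹} : Set G) :=
        subset_closure (Set.mem_insert_of_mem _ rfl)
      simpa using inv_mem hz'
    simp only [hS, Set.mem_setOf_eq]
    rw [hcl]
    exact hy
  obtain ⟨i, hi⟩ := hmem _ hbad1
  obtain ⟨k, hk⟩ := hmem _ hbad2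
  -- y * x * y⁻¹ ∈ zpowers x
  have hconj1 : y * x * y⁻¹ ∈ zpowers x := by
    have h2 : y * x⁻¹ * y⁻¹ = x⁻¹ * (x * y * x⁻¹) * y⁻¹ := by group
    rw [hi] at h2
    have h2' : y * x⁻¹ * y⁻¹ = x⁻¹ * x ^ i := by rw [h2]; group
    have h3 : y * x * y⁻¹ = (y * x⁻¹ * y⁻¹)⁻¹ := by group
    rw [h3, h2']
    exact inv_mem (mul_mem (inv_mem (mem_zpowers x)) (pow_mem (mem_zpowers x) i))
  have hconj2 : y⁻¹ * x * y ∈ zpowers x := by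
    have h1 : y⁻¹ * x * (y⁻¹)⁻¹ = x ^ k * (y * x * y⁻¹) * (x ^ k)⁻¹ := by
      conv_lhs => rw [hk]
      group
    have h2 : y⁻¹ * x * y = x ^ k * (y * x * y⁻¹) * (x ^ k)⁻¹ := by
      rw [← h1, inv_inv]
    rw [h2]
    exact mul_mem (mul_mem (pow_mem (mem_zpowers x) k) hconj1)
      (inv_mem (pow_mem (mem_zpowers x) k))
  -- y normalizes zpowers x
  have hyN : y ∈ (Subgroup.normalizer ((zpowers x : Subgroup G) : Set G)) := by
    rw [Subgroup.mem_normalizer_iff]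
    intro g
    constructor
    · intro hg
      rw [mem_zpowers_iff] at hg
      obtain ⟨m, rfl⟩ := hg
      have h5 : y * x ^ m * y⁻¹ = (y * x * y⁻¹) ^ m := conj_zpow.symm
      rw [h5]
      exact zpow_mem hconj1 m
    · intro hg
      rw [mem_zpowers_iff] at hg
      obtain ⟨m, hm⟩ := hg
      have h6 : (y⁻¹ * x * y) ^ m = y⁻¹ * x ^ m * y := by
        have h7 := conj_zpow (i := m) (a := y⁻¹) (b := x)
        rwa [inv_inv] at h7
      have h5 : g = (y⁻¹ * x * y) ^ m := by
        rw [h6, hm]; group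
      rw [h5]
      exact zpow_mem hconj2 m
  exact hy (solvable_closure_of_normalizer hyN)
end

section
/- Let G be a finite group and x ∈ G with x ∉ Sol(G). Then deg(x), the number of elements y ∈ G such that ⟨x,y⟩ is not solvable, is not a prime number. -/
private lemma zpowers_comm {G : Type*} [Group G] {z a b : G}
    (ha : a ∈ Subgroup.zpowers z) (hb : b ∈ Subgroup.zpowers z) : a * b = b * a := by
  obtain ⟨m, rfl⟩ := ha
  obtain ⟨n, rfl⟩ := hb
  rw [← zpow_add, ← zpow_add, add_comm]

private lemma solvable_of_comm_subgroup {G : Type*} [Group G] (H : Subgroup G)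
    (h : ∀ a b : G, a ∈ H → b ∈ H → a * b = b * a) : IsSolvable ↥H :=
  isSolvable_of_comm fun a b => Subtype.ext (h a b a.2 b.2)

private lemma closure_pair_mul_right {G : Type*} [Group G] (x y h : G)
    (hh : h ∈ Subgroup.zpowers x) :
    Subgroup.closure ({x, y * h} : Set G) = Subgroup.closure ({x, y} : Set G) := by
  have hx1 : x ∈ Subgroup.closure ({x, y} : Set G) := Subgroup.subset_closure (by simp)
  have hx2 : x ∈ Subgroup.closure ({x, y * h} : Set G) := Subgroup.subset_closure (by simp)
  have hH1 : h ∈ Subgroup.closure ({x, y} : Set G) := by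
    obtain ⟨k, rfl⟩ := hh; exact zpow_mem hx1 k
  have hH2 : h ∈ Subgroup.closure ({x, y * h} : Set G) := by
    obtain ⟨k, rfl⟩ := hh; exact zpow_mem hx2 k
  apply le_antisymm <;>
    rw [Subgroup.closure_le, Set.insert_subset_iff, Set.singleton_subset_iff]
  · exact ⟨hx1, mul_mem (Subgroup.subset_closure (by simp)) hH1⟩
  · refine ⟨hx2, ?_⟩
    have hy : y * h ∈ Subgroup.closure ({x, y * h} : Set G) :=
      Subgroup.subset_closure (by simp)
    simpa using mul_mem hy (inv_mem hH2)

private lemma closure_pair_mul_left {G : Type*} [Group G] (x y h : G)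
    (hh : h ∈ Subgroup.zpowers x) :
    Subgroup.closure ({x, h * y} : Set G) = Subgroup.closure ({x, y} : Set G) := by
  have hx1 : x ∈ Subgroup.closure ({x, y} : Set G) := Subgroup.subset_closure (by simp)
  have hx2 : x ∈ Subgroup.closure ({x, h * y} : Set G) := Subgroup.subset_closure (by simp)
  have hH1 : h ∈ Subgroup.closure ({x, y} : Set G) := by
    obtain ⟨k, rfl⟩ := hh; exact zpow_mem hx1 k
  have hH2 : h ∈ Subgroup.closure ({x, h * y} : Set G) := by
    obtain ⟨k, rfl⟩ := hh; exact zpow_mem hx2 k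
  apply le_antisymm <;>
    rw [Subgroup.closure_le, Set.insert_subset_iff, Set.singleton_subset_iff]
  · exact ⟨hx1, mul_mem hH1 (Subgroup.subset_closure (by simp))⟩
  · refine ⟨hx2, ?_⟩
    have hy : h * y ∈ Subgroup.closure ({x, h * y} : Set G) :=
      Subgroup.subset_closure (by simp)
    simpa using mul_mem (inv_mem hH2) hy

/-- Let `G` be a finite group and `x ∉ Sol(G)`. Then `deg(x)`, the number of
`y ∈ G` with `⟨x, y⟩` not solvable, is not a prime number. -/
theorem degree_not_prime (G : Type*) [Group G] [Finite G] (x : G)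
    (hx : ¬ (∀ z : G, IsSolvable ↥(Subgroup.closure ({x, z} : Set G)))) :
    ¬ Nat.Prime
      (Nat.card {y : G | ¬ IsSolvable ↥(Subgroup.closure ({x, y} : Set G))}) := by
  set T : Set G := {y : G | ¬ IsSolvable ↥(Subgroup.closure ({x, y} : Set G))} with hTdef
  intro hp
  set H : Subgroup G := Subgroup.zpowers x with hHdef
  -- T is closed under right and left multiplication by elements of H
  have hTr : ∀ y ∈ T, ∀ h ∈ H, y * h ∈ T := by
    intro y hy h hh
    have : Subgroup.closure ({x, y * h} : Set G) = Subgroup.closure ({x, y} : Set G) :=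
      closure_pair_mul_right x y h hh
    simp only [hTdef, Set.mem_setOf_eq] at hy ⊢
    rw [this]; exact hy
  have hTl : ∀ y ∈ T, ∀ h ∈ H, h * y ∈ T := by
    intro y hy h hh
    have : Subgroup.closure ({x, h * y} : Set G) = Subgroup.closure ({x, y} : Set G) :=
      closure_pair_mul_left x y h hh
    simp only [hTdef, Set.mem_setOf_eq] at hy ⊢
    rw [this]; exact hy
  set s : Set (G ⧸ H) := QuotientGroup.mk '' T with hsdef
  have hpre : QuotientGroup.mk ⁻¹' s = T := by
    apply Set.Subset.antisymm
    · rintro g hg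
      obtain ⟨t, ht, htg⟩ := hg
      have hmem : t⁻¹ * g ∈ H := QuotientGroup.eq.mp htg
      have := hTr t ht _ hmem
      simpa using this
    · exact Set.subset_preimage_image _ _
  have hcard : Nat.card T = Nat.card H * Nat.card s := by
    rw [← hpre, Nat.card_congr (QuotientGroup.preimageMkEquivSubgroupProdSet H s),
      Nat.card_prod]
  have hdvd : Nat.card H ∣ Nat.card T := ⟨Nat.card s, hcard⟩
  rcases hp.eq_one_or_self_of_dvd _ hdvd with h1 | hHp
  · -- |H| = 1, so x = 1, contradicting hx
    have hx1 : x = 1 := by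
      rw [← orderOf_eq_one_iff, ← Nat.card_zpowers]; exact h1
    apply hx
    intro z
    have hcl : Subgroup.closure ({x, z} : Set G) = Subgroup.zpowers z := by
      subst hx1
      apply le_antisymm
      · rw [Subgroup.closure_le, Set.insert_subset_iff, Set.singleton_subset_iff]
        exact ⟨one_mem _, Subgroup.mem_zpowers z⟩
      · rw [Subgroup.zpowers_le]
        exact Subgroup.subset_closure (by simp)
    rw [hcl]
    exact solvable_of_comm_subgroup _ fun a b ha hb => zpowers_comm ha hb
  · -- |H| = |T|, so T is a single coset of H
    have hcards : Nat.card s = 1 := by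
      rw [hHp] at hcard
      exact mul_left_cancel₀ hp.pos.ne' (by rw [← hcard, mul_one])
    push_neg at hx
    obtain ⟨t, ht⟩ := hx
    have htT : t ∈ T := ht
    have hst : (QuotientGroup.mk t : G ⧸ H) ∈ s := ⟨t, htT, rfl⟩
    have hsub : Subsingleton s := (Nat.card_eq_one_iff_unique.mp hcards).1
    have hmk : ∀ y ∈ T, (QuotientGroup.mk y : G ⧸ H) = QuotientGroup.mk t := by
      intro y hy
      have h1 : (QuotientGroup.mk y : G ⧸ H) ∈ s := ⟨y, hy, rfl⟩
      exact Subtype.ext_iff.mp (hsub.elim ⟨_, h1⟩ ⟨_, hst⟩)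
    -- t⁻¹ x^k t ∈ H for all k
    have hconj : ∀ k : ℤ, t⁻¹ * x ^ k * t ∈ H := by
      intro k
      have h1 : x ^ (-k) * t ∈ T := hTl t htT _ (zpow_mem (Subgroup.mem_zpowers x) (-k))
      have h2 := QuotientGroup.eq.mp (hmk _ h1)
      have h3 : (x ^ (-k) * t)⁻¹ * t = t⁻¹ * x ^ k * t := by
        rw [mul_inv_rev, zpow_neg, inv_inv]
      rwa [h3] at h2
    have htinv : t⁻¹ ∈ Subgroup.normalizer (H : Set G) := by
      have := Subgroup.mem_normalizer_fintype (S := (H : Set G)) (x := t⁻¹) ?_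
      · exact this
      · rintro n hn
        obtain ⟨k, rfl⟩ := hn
        simpa [mul_assoc] using hconj k
    have htn : t ∈ Subgroup.normalizer (H : Set G) := by
      have := (Subgroup.normalizer (H : Set G)).inv_mem htinv
      simpa using this
    set K : Subgroup G := Subgroup.closure ({x, t} : Set G) with hKdef
    have hxK : x ∈ K := Subgroup.subset_closure (by simp)
    have htK : t ∈ K := Subgroup.subset_closure (by simp)
    have hHK : H ≤ K := by rw [hHdef, Subgroup.zpowers_le]; exact hxK
    have hKN : K ≤ Subgroup.normalizer (H : Set G) := by
      rw [hKdef, Subgroup.closure_le, Set.insert_subset_iff, Set.singleton_subset_iff]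
      exact ⟨Subgroup.le_normalizer (Subgroup.mem_zpowers x), htn⟩
    set N : Subgroup K := H.subgroupOf K with hNdef
    have hNnormal : N.Normal := by
      constructor
      intro n hn g
      rw [hNdef, Subgroup.mem_subgroupOf] at hn ⊢
      have := (Subgroup.mem_normalizer_iff.mp (hKN g.2) (n : G)).mp hn
      simpa [mul_assoc] using this
    -- the quotient K ⧸ N is generated by the image of t, hence commutative
    set τ : K ⧸ N := QuotientGroup.mk (⟨t, htK⟩ : K) with hτdef
    have key : ∀ g (hg : g ∈ K), (QuotientGroup.mk (⟨g, hg⟩ : K) : K ⧸ N) ∈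
        Subgroup.zpowers τ := by
      intro g hg
      rw [hKdef] at hg
      induction hg using Subgroup.closure_induction with
      | mem y hy =>
          rcases hy with rfl | rfl
          · have hmem : (⟨y, hHK (Subgroup.mem_zpowers y)⟩ : K) ∈ N := by
              rw [hNdef, Subgroup.mem_subgroupOf]
              exact Subgroup.mem_zpowers y
            have h1 : (QuotientGroup.mk (⟨y, hHK (Subgroup.mem_zpowers y)⟩ : K) : K ⧸ N) = 1 :=
              (QuotientGroup.eq_one_iff _).mpr hmem
            rw [h1]
            exact one_mem _
          · exact Subgroup.mem_zpowers τ
      | one =>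
          have h1 : (QuotientGroup.mk (⟨1, one_mem K⟩ : K) : K ⧸ N) = 1 :=
            (QuotientGroup.eq_one_iff _).mpr (one_mem N)
          rw [h1]
          exact one_mem _
      | mul a b ha hb iha ihb =>
          have h1 : (⟨a * b, mul_mem ha hb⟩ : K) = ⟨a, ha⟩ * ⟨b, hb⟩ := rfl
          rw [h1, QuotientGroup.mk_mul]
          exact mul_mem (iha ha) (ihb hb)
      | inv a ha iha =>
          have h1 : (⟨a⁻¹, inv_mem ha⟩ : K) = (⟨a, ha⟩ : K)⁻¹ := rfl
          rw [h1, QuotientGroup.mk_inv]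
          exact inv_mem (iha ha)
    have hQ : IsSolvable (K ⧸ N) := by
      apply isSolvable_of_comm
      intro a b
      obtain ⟨a', rfl⟩ := QuotientGroup.mk_surjective a
      obtain ⟨b', rfl⟩ := QuotientGroup.mk_surjective b
      exact zpowers_comm (key a'.1 a'.2) (key b'.1 b'.2)
    have hN : IsSolvable ↥N := by
      apply solvable_of_comm_subgroup
      intro a b ha hb
      rw [hNdef, Subgroup.mem_subgroupOf] at ha hb
      exact Subtype.ext (zpowers_comm ha hb)
    have hK : IsSolvable ↥K :=
      solvable_of_ker_le_range N.subtype (QuotientGroup.mk' N)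
        (by rw [QuotientGroup.ker_mk', Subgroup.range_subtype]) (hG' := hN) (hG'' := hQ)
    exact htT hK
end

section
/- Let G be a finite non-solvable group and let n = |G| - |Sol(G)| be the number of vertices of the induced non-solvable graph on G ∖ Sol(G). Then every x ∈ G with x ∉ Sol(G) satisfies deg(x) < n - 1; that is, the maximum degree of the induced graph is strictly less than n - 1. -/
open Subgroup

/-- A group generated by two involutions is solvable (it is "dihedral"). -/
lemma dihedral_solvable {K : Type*} [Group K] (a b : K) (ha : a * a = 1) (hb : b * b = 1)
    (hgen : closure ({a, b} : Set K) = ⊤) : IsSolvable K := by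
  have ha' : a⁻¹ = a := by rw [inv_eq_iff_mul_eq_one, ha]
  have hb' : b⁻¹ = b := by rw [inv_eq_iff_mul_eq_one, hb]
  set t := a * b with ht
  have hat : a * t * a⁻¹ = t⁻¹ := by
    rw [ht, ha', mul_inv_rev, ha', hb',
      show a * (a * b) * a = a * a * (b * a) by group, ha, one_mul]
  have hbt : b * t * b⁻¹ = t⁻¹ := by
    rw [ht, hb', mul_inv_rev, ha', hb',
      show b * (a * b) * b = b * a * (b * b) by group, hb, mul_one]
  set N := zpowers t with hN
  have hconj : ∀ c : K, c * t * c⁻¹ = t⁻¹ → ∀ k : ℤ, c * t ^ k * c⁻¹ ∈ N := by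
    intro c hc k
    refine mem_zpowers_iff.mpr ⟨-k, ?_⟩
    rw [← conj_zpow, hc, inv_zpow, zpow_neg]
  have key : ∀ g : K, (∀ n ∈ N, g * n * g⁻¹ ∈ N ∧ g⁻¹ * n * g ∈ N) := by
    intro g
    have hg : g ∈ closure ({a, b} : Set K) := by rw [hgen]; trivial
    induction hg using closure_induction with
    | mem u hu =>
      intro n hn
      obtain ⟨k, rfl⟩ := mem_zpowers_iff.mp hn
      rcases hu with rfl | rfl
      · exact ⟨hconj u hat k, by simpa [ha'] using hconj u hat k⟩
      · exact ⟨hconj u hbt k, by simpa [hb'] using hconj u hbt k⟩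
    | one => exact fun n hn => ⟨by simpa using hn, by simpa using hn⟩
    | mul u v hu hv ihu ihv =>
      intro n hn
      constructor
      · have h2 := (ihu _ (ihv n hn).1).1
        simpa [mul_assoc, mul_inv_rev] using h2
      · have h2 := (ihv _ (ihu n hn).2).2
        simpa [mul_assoc, mul_inv_rev] using h2
    | inv u hu ihu =>
      intro n hn
      exact ⟨by simpa using (ihu n hn).2, by simpa using (ihu n hn).1⟩
  have hNnormal : N.Normal := ⟨fun n hn g => (key g n hn).1⟩
  have hsurj : Function.Surjective (QuotientGroup.mk' N) := QuotientGroup.mk'_surjective N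
  have hmapeq : (QuotientGroup.mk' N) a = (QuotientGroup.mk' N) b := by
    rw [QuotientGroup.mk'_eq_mk']
    refine ⟨t, mem_zpowers t, ?_⟩
    rw [ht, ← mul_assoc, ha, one_mul]
  have hcyc : ∀ u : K ⧸ N, u ∈ zpowers ((QuotientGroup.mk' N) a) := by
    intro u
    obtain ⟨g, rfl⟩ := hsurj u
    have hg : g ∈ closure ({a, b} : Set K) := by rw [hgen]; trivial
    induction hg using closure_induction with
    | mem u hu =>
      rcases hu with rfl | rfl
      · exact mem_zpowers _
      · rw [← hmapeq]; exact mem_zpowers _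
    | one => exact Subgroup.one_mem _
    | mul u v hu hv ihu ihv =>
      obtain ⟨k, hk⟩ := mem_zpowers_iff.mp ihu
      obtain ⟨l, hl⟩ := mem_zpowers_iff.mp ihv
      exact mem_zpowers_iff.mpr ⟨k + l, by rw [zpow_add, hk, hl, map_mul]⟩
    | inv u hu ihu =>
      obtain ⟨k, hk⟩ := mem_zpowers_iff.mp ihu
      exact mem_zpowers_iff.mpr ⟨-k, by rw [zpow_neg, hk, map_inv]⟩
  have hQ : IsSolvable (K ⧸ N) := by
    apply isSolvable_of_comm
    intro u v
    obtain ⟨k, hk⟩ := mem_zpowers_iff.mp (hcyc u)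
    obtain ⟨l, hl⟩ := mem_zpowers_iff.mp (hcyc v)
    rw [← hk, ← hl, ← zpow_add, ← zpow_add, add_comm]
  have hNsolv : IsSolvable N := by
    apply isSolvable_of_comm
    intro ⟨p, hp⟩ ⟨q, hq⟩
    obtain ⟨k, rfl⟩ := mem_zpowers_iff.mp hp
    obtain ⟨l, rfl⟩ := mem_zpowers_iff.mp hq
    ext
    simp [← zpow_add, add_comm]
  exact solvable_of_ker_le_range N.subtype (QuotientGroup.mk' N)
    (by rw [QuotientGroup.ker_mk', Subgroup.range_subtype]) (hG' := hNsolv) (hG'' := hQ)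

/-- The closure of a set of pairwise commuting elements is solvable. -/
lemma solvable_closure_of_comm {G : Type*} [Group G] {s : Set G}
    (h : ∀ a ∈ s, ∀ b ∈ s, a * b = b * a) : IsSolvable ↥(closure s) := by
  have key : ∀ p ∈ closure s, ∀ q ∈ closure s, p * q = q * p := by
    intro p hp
    induction hp using closure_induction with
    | mem u hu =>
      intro q hq
      induction hq using closure_induction with
      | mem v hv => exact h u hu v hv
      | one => simp
      | mul v w hv hw ihv ihw =>
        rw [← mul_assoc, ihv, mul_assoc, ihw, mul_assoc]
      | inv v hv ihv => exact (Commute.inv_right ihv)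
    | one => intro q hq; simp
    | mul u v hu hv ihu ihv =>
      intro q hq
      exact (Commute.mul_left (ihu q hq) (ihv q hq))
    | inv u hu ihu =>
      intro q hq
      exact (Commute.inv_left (ihu q hq))
  apply isSolvable_of_comm
  intro ⟨p, hp⟩ ⟨q, hq⟩
  exact Subtype.ext (key p hp q hq)

/-- Solvability of a closure transfers along a group automorphism. -/
lemma solvable_closure_of_equiv {G : Type*} [Group G] (e : G ≃* G) (s : Set G)
    (h : IsSolvable ↥(closure (e '' s))) : IsSolvable ↥(closure s) := by
  have hmap : (closure s).map e.toMonoidHom = closure (e '' s) :=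
    MonoidHom.map_closure e.toMonoidHom s
  letI : Group.IsSolvable ↥((closure s).map e.toMonoidHom) := by rw [hmap]; exact h
  exact solvable_of_solvable_injective
    (f := (Subgroup.equivMapOfInjective (closure s) e.toMonoidHom e.injective).toMonoidHom)
    (Subgroup.equivMapOfInjective (closure s) e.toMonoidHom e.injective).injective

/-- The subgroup generated by two elements of order dividing 2 is solvable. -/
lemma solvable_closure_pair_of_sq {G : Type*} [Group G] (x y : G) (hx2 : x * x = 1)
    (hy2 : y * y = 1) : IsSolvable ↥(closure ({x, y} : Set G)) := by
  set H := closure ({x, y} : Set G) with hH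
  have hxH : x ∈ H := subset_closure (by simp)
  have hyH : y ∈ H := subset_closure (by simp)
  set a : H := ⟨x, hxH⟩
  set b : H := ⟨y, hyH⟩
  apply dihedral_solvable a b (Subtype.ext hx2) (Subtype.ext hy2)
  have h1 : closure (((↑) : H → G) ⁻¹' {x, y}) = ⊤ := closure_closure_coe_preimage
  rw [eq_top_iff, ← h1]
  apply Subgroup.closure_mono
  rintro u hu
  rcases hu with h | h
  · exact Or.inl (Subtype.ext h)
  · exact Or.inr (Subtype.ext h)

lemma closure_pair_inv {G : Type*} [Group G] (x z : G) :
    closure ({x⁻¹, z} : Set G) = closure ({x, z} : Set G) := by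
  apply le_antisymm <;> rw [closure_le] <;> rintro g (h | h) <;> rw [h]
  · exact inv_mem (subset_closure (by simp))
  · exact subset_closure (by simp)
  · simpa using inv_mem (subset_closure (show x⁻¹ ∈ ({x⁻¹, z} : Set G) by simp))
  · exact subset_closure (by simp)

/-- Let `G` be a finite non-solvable group and `n = |G| - |Sol(G)|` the number of
vertices of the induced non-solvable graph on `G \ Sol(G)`. Then every vertex
`x ∉ Sol(G)` has degree strictly less than `n - 1`. -/
theorem degree_lt_card_sub_one (G : Type*) [Group G] [Finite G]
    (hG : ¬ IsSolvable G) (x : G)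
    (hx : ¬ (∀ z : G, IsSolvable ↥(Subgroup.closure ({x, z} : Set G)))) :
    Nat.card {y : G | ¬ IsSolvable ↥(Subgroup.closure ({x, y} : Set G))} <
      (Nat.card G -
        Nat.card {g : G | ∀ z : G, IsSolvable ↥(Subgroup.closure ({g, z} : Set G))}) - 1 := by
  classical
  set S : Set G := {g : G | ∀ z : G, IsSolvable ↥(Subgroup.closure ({g, z} : Set G))} with hS
  set D : Set G := {y : G | ¬ IsSolvable ↥(Subgroup.closure ({x, y} : Set G))} with hD
  have hxS : x ∉ S := fun h => hx h
  have hxD : x ∉ D := by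
    intro h
    exact h (solvable_closure_of_comm (by rintro a (rfl | rfl) b (rfl | rfl) <;> rfl))
  have hDS : ∀ y ∈ D, y ∉ S := by
    intro y hy hyS
    exact hy (by rw [Set.pair_comm]; exact hyS x)
  -- produce a vertex `y₀ ≠ x` outside `S` and not adjacent to `x`
  have hy₀ : ∃ y₀ : G, y₀ ≠ x ∧ y₀ ∉ S ∧ y₀ ∉ D := by
    by_cases h2 : x * x = 1
    · -- x is an involution; it is not central, take a distinct conjugate
      have hnc : ∃ c : G, c * x * c⁻¹ ≠ x := by
        by_contra hcen
        push_neg at hcen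
        apply hx
        intro z
        have hcomm : ∀ g : G, g * x = x * g := by
          intro g
          have hg := hcen g
          rwa [mul_inv_eq_iff_eq_mul] at hg
        apply solvable_closure_of_comm
        rintro a (rfl | rfl) b (rfl | rfl)
        · rfl
        · exact (hcomm b).symm
        · exact hcomm a
        · rfl
      obtain ⟨c, hc⟩ := hnc
      refine ⟨c * x * c⁻¹, hc, ?_, ?_⟩
      · intro hyS
        apply hx
        intro z
        apply solvable_closure_of_equiv (MulAut.conj c)
        rw [Set.image_pair]
        rw [MulAut.conj_apply, MulAut.conj_apply]; exact hyS (c * z * c⁻¹)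
      · intro hD'
        refine hD' (solvable_closure_pair_of_sq _ _ h2 ?_)
        rw [show (c * x * c⁻¹) * (c * x * c⁻¹) = c * (x * x) * c⁻¹ by group, h2, mul_one,
          mul_inv_cancel]
    · refine ⟨x⁻¹, fun h => h2 (mul_eq_one_iff_eq_inv.mpr h.symm), ?_, ?_⟩
      · intro hS'
        apply hx
        intro z
        have := hS' z
        rwa [closure_pair_inv] at this
      · intro hD'
        apply hD'
        apply solvable_closure_of_comm
        rintro a (rfl | rfl) b (rfl | rfl) <;> simp
  obtain ⟨y₀, hy₀x, hy₀S, hy₀D⟩ := hy₀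
  -- counting
  have hdisjDS : Disjoint D S := Set.disjoint_left.mpr hDS
  have hcard1 : (D ∪ S).ncard = D.ncard + S.ncard :=
    Set.ncard_union_eq hdisjDS (Set.toFinite _) (Set.toFinite _)
  have hy₀mem : y₀ ∉ D ∪ S := by
    rintro (h | h)
    · exact hy₀D h
    · exact hy₀S h
  have hxmem : x ∉ insert y₀ (D ∪ S) := by
    rintro (h | h | h)
    · exact hy₀x h.symm
    · exact hxD h
    · exact hxS h
  have hcard2 : (insert y₀ (D ∪ S)).ncard = (D ∪ S).ncard + 1 :=
    Set.ncard_insert_of_notMem hy₀mem (Set.toFinite _)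
  have hcard3 : (insert x (insert y₀ (D ∪ S))).ncard = (insert y₀ (D ∪ S)).ncard + 1 :=
    Set.ncard_insert_of_notMem hxmem (Set.toFinite _)
  have hle : (insert x (insert y₀ (D ∪ S))).ncard ≤ Nat.card G := by
    rw [← Set.ncard_univ]
    exact Set.ncard_le_ncard (Set.subset_univ _) (Set.toFinite _)
  have hDcard : Nat.card ↥D = D.ncard := Nat.card_coe_set_eq D
  have hScard : Nat.card ↥S = S.ncard := Nat.card_coe_set_eq S
  rw [hDcard, hScard]
  omega
end
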